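/- Let q₁,...,q₅ ∈ ℤ and suppose that q₁+q₃ and q₂+q₄ are either both positive or both negative. Then q₁+q₂+q₃+q₄ ≠ 0, and for every h ∈ Sp2 one has Σ_{ℓ=1}^5 (|h_{ℓ2}|² + |h_{ℓ4}|²) q_ℓ ≠ 0. -/

import Mathlib

open Finset

noncomputable section

/-- SU(5): 5×5 special unitary complex matrices. -/
def SU5 : Set (Matrix (Fin 5) (Fin 5) ℂ) :=
  {A | A * A.conjTranspose = 1 ∧ A.det = 1}

/-- The image of the embedding Sp(2) ↪ SU(5). -/
def Sp2 : Set (Matrix (Fin 5) (Fin 5) ℂ) :=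
  {h | h ∈ SU5 ∧
    (∀ i : Fin 5, h i 4 = if i = 4 then 1 else 0) ∧
    (∀ i : Fin 5, h 4 i = if i = 4 then 1 else 0) ∧
    (∀ i j : Fin 5, i < 2 → j < 2 →
      h (i + 2) (j + 2) = (starRingEnd ℂ) (h i j) ∧
      h (i + 2) j = -(starRingEnd ℂ) (h i (j + 2)))}

theorem stmt1 (q : Fin 5 → ℤ)
    (hq : (0 < q 0 + q 2 ∧ 0 < q 1 + q 3) ∨ (q 0 + q 2 < 0 ∧ q 1 + q 3 < 0)) :
    q 0 + q 1 + q 2 + q 3 ≠ 0 ∧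
    ∀ h ∈ Sp2,
      ∑ ℓ : Fin 5, (‖h ℓ 1‖ ^ 2 + ‖h ℓ 3‖ ^ 2) * (q ℓ : ℝ) ≠ 0 := by
  constructor
  · rcases hq with ⟨h1, h2⟩ | ⟨h1, h2⟩ <;> omega
  · rintro h ⟨⟨hu, _⟩, hcol, hrow, hsym⟩
    -- symmetry relations
    obtain ⟨e23, e21⟩ := hsym 0 1 (by decide) (by decide)
    obtain ⟨e33, e31⟩ := hsym 1 1 (by decide) (by decide)
    have h41 : h 4 1 = 0 := by simpa using hrow 1
    have h43 : h 4 3 = 0 := by simpa using hrow 3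
    -- column 1 has unit norm
    have e23' : h 2 3 = (starRingEnd ℂ) (h 0 1) := e23
    have e21' : h 2 1 = -(starRingEnd ℂ) (h 0 3) := e21
    have e33' : h 3 3 = (starRingEnd ℂ) (h 1 1) := e33
    have e31' : h 3 1 = -(starRingEnd ℂ) (h 1 3) := e31
    have hu' : h.conjTranspose * h = 1 := mul_eq_one_comm.mp hu
    have hc1 : (h.conjTranspose * h) 1 1 = 1 := by rw [hu']; simp [Matrix.one_apply]
    rw [Matrix.mul_apply] at hc1
    simp only [Matrix.conjTranspose_apply] at hc1
    rw [Fin.sum_univ_five] at hc1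
    rw [e21', e31', h41] at hc1
    have e : ∀ z : ℂ, star z * z = ((‖z‖ ^ 2 : ℝ) : ℂ) := by
      intro z
      rw [Complex.star_def, mul_comm, Complex.mul_conj]
      norm_cast
      exact Complex.normSq_eq_norm_sq z
    have e' : ∀ w : ℂ, star (-(starRingEnd ℂ) w) * (-(starRingEnd ℂ) w)
        = ((‖w‖ ^ 2 : ℝ) : ℂ) := by
      intro w
      rw [e]
      norm_cast
      simp
    rw [e, e, e', e'] at hc1
    simp only [star_zero, mul_zero, add_zero] at hc1
    have key : ‖h 0 1‖ ^ 2 + ‖h 1 1‖ ^ 2 +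
        ‖h 0 3‖ ^ 2 + ‖h 1 3‖ ^ 2 = 1 := by
      exact_mod_cast hc1
    -- rewrite the sum
    rw [Fin.sum_univ_five]
    rw [e21', e23', e31', e33', h41, h43]
    simp only [map_neg, norm_neg, Complex.norm_conj]
    set A := ‖h 0 1‖ ^ 2 with hA
    set B := ‖h 1 1‖ ^ 2 with hB
    set C := ‖h 0 3‖ ^ 2 with hC
    set D := ‖h 1 3‖ ^ 2 with hD
    have hA0 : 0 ≤ A := by positivity
    have hB0 : 0 ≤ B := by positivity
    have hC0 : 0 ≤ C := by positivity
    have hD0 : 0 ≤ D := by positivity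
    rcases hq with ⟨h1, h2⟩ | ⟨h1, h2⟩
    · have h1' : (1:ℝ) ≤ (q 0 : ℝ) + q 2 := by exact_mod_cast h1
      have h2' : (1:ℝ) ≤ (q 1 : ℝ) + q 3 := by exact_mod_cast h2
      have : 0 < (A + C) * (q 0 : ℝ) + (B + D) * (q 1 : ℝ) + (C + A) * (q 2 : ℝ)
          + (D + B) * (q 3 : ℝ) := by nlinarith
      intro hcon
      simp only [norm_zero] at hcon
      nlinarith
    · have h1' : (q 0 : ℝ) + q 2 ≤ -1 := by exact_mod_cast (by omega : q 0 + q 2 ≤ -1)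
      have h2' : (q 1 : ℝ) + q 3 ≤ -1 := by exact_mod_cast (by omega : q 1 + q 3 ≤ -1)
      have : (A + C) * (q 0 : ℝ) + (B + D) * (q 1 : ℝ) + (C + A) * (q 2 : ℝ)
          + (D + B) * (q 3 : ℝ) < 0 := by nlinarith
      intro hcon
      simp only [norm_zero] at hcon
      nlinarith
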